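/- Let Σ_p be an N×N Hermitian positive definite complex matrix, Σ_m an m×m Hermitian positive definite complex matrix, and C an m×N complex matrix. For an N×m complex matrix K, let Σ(K) = (I − K C) Σ_p (I − K C)^H + K Σ_m K^H. Let K* = Σ_p C^H (C Σ_p C^H + Σ_m)⁻¹. Then for every N×m complex matrix K, tr(Σ(K*)) ≤ tr(Σ(K)), and moreover Σ(K*) = (Σ_p⁻¹ + C^H Σ_m⁻¹ C)⁻¹. -/

import Mathlib

open Matrix ComplexOrder

lemma my_trace_re_nonneg {n : ℕ} (M : Matrix (Fin n) (Fin n) ℂ) (hM : M.PosSemidef) :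
    0 ≤ M.trace.re := by
  have h : ∀ i, 0 ≤ M i i := fun i => by
    exact hM.diag_nonneg
  have : (0:ℂ) ≤ M.trace := Finset.sum_nonneg fun i _ => h i
  exact_mod_cast (Complex.le_def.mp this).1

/-- The gain `K* = Σ_p Cᴴ (C Σ_p Cᴴ + Σ_m)⁻¹` minimizes the trace of
`Σ(K) = (I − K C) Σ_p (I − K C)ᴴ + K Σ_m Kᴴ` over all gains `K`, and
`Σ(K*) = (Σ_p⁻¹ + Cᴴ Σ_m⁻¹ C)⁻¹`. -/
theorem optimal_gain (N m : ℕ)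
    (Sp : Matrix (Fin N) (Fin N) ℂ) (hSp : Sp.PosDef)
    (Sm : Matrix (Fin m) (Fin m) ℂ) (hSm : Sm.PosDef)
    (C : Matrix (Fin m) (Fin N) ℂ)
    (Kstar : Matrix (Fin N) (Fin m) ℂ)
    (hKstar : Kstar = Sp * Cᴴ * (C * Sp * Cᴴ + Sm)⁻¹) :
    (∀ K : Matrix (Fin N) (Fin m) ℂ,
      ((((1 : Matrix (Fin N) (Fin N) ℂ) - Kstar * C) * Sp * ((1 : Matrix (Fin N) (Fin N) ℂ) - Kstar * C)ᴴ
          + Kstar * Sm * Kstarᴴ).trace).re ≤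
      ((((1 : Matrix (Fin N) (Fin N) ℂ) - K * C) * Sp * ((1 : Matrix (Fin N) (Fin N) ℂ) - K * C)ᴴ
          + K * Sm * Kᴴ).trace).re) ∧
    ((1 : Matrix (Fin N) (Fin N) ℂ) - Kstar * C) * Sp * ((1 : Matrix (Fin N) (Fin N) ℂ) - Kstar * C)ᴴ
        + Kstar * Sm * Kstarᴴ = (Sp⁻¹ + Cᴴ * Sm⁻¹ * C)⁻¹ := by
  set S : Matrix (Fin m) (Fin m) ℂ := C * Sp * Cᴴ + Sm with hSdef
  have hS : S.PosDef := Matrix.PosDef.posSemidef_add (hSp.posSemidef.mul_mul_conjTranspose_same C) hSm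
  have hSu : IsUnit S.det := (isUnit_iff_isUnit_det _).1 hS.isUnit
  have hSpu : IsUnit Sp.det := (isUnit_iff_isUnit_det _).1 hSp.isUnit
  have hSmu : IsUnit Sm.det := (isUnit_iff_isUnit_det _).1 hSm.isUnit
  have hA1 : S⁻¹ * S = 1 := nonsing_inv_mul _ hSu
  have hA2 : S * S⁻¹ = 1 := mul_nonsing_inv _ hSu
  have hSp1 : Sp * Sp⁻¹ = 1 := mul_nonsing_inv _ hSpu
  have hSm2 : Sm * Sm⁻¹ = 1 := mul_nonsing_inv _ hSmu
  have hKS : Kstar * S = Sp * Cᴴ := by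
    rw [hKstar, Matrix.mul_assoc, hA1, Matrix.mul_one]
  have hKh : Kstarᴴ = S⁻¹ * (C * Sp) := by
    rw [hKstar]
    simp [conjTranspose_mul, conjTranspose_nonsing_inv, hS.isHermitian.eq,
      hSp.isHermitian.eq, Matrix.mul_assoc]
  have hSK : S * Kstarᴴ = C * Sp := by
    rw [hKh, ← Matrix.mul_assoc, hA2, Matrix.one_mul]
  have hPCK : Sp * Cᴴ * Kstarᴴ = Kstar * (C * Sp) := by
    rw [hKh, hKstar]
    simp only [Matrix.mul_assoc]
  have expand : ∀ K : Matrix (Fin N) (Fin m) ℂ,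
      ((1 : Matrix (Fin N) (Fin N) ℂ) - K * C) * Sp * ((1 : Matrix (Fin N) (Fin N) ℂ) - K * C)ᴴ
        + K * Sm * Kᴴ
      = Sp - K * (C * Sp) - (Sp * Cᴴ) * Kᴴ + K * S * Kᴴ := by
    intro K
    rw [hSdef]
    simp only [conjTranspose_sub, conjTranspose_mul, conjTranspose_one, hSp.isHermitian.eq,
      Matrix.mul_sub, Matrix.sub_mul, Matrix.mul_add, Matrix.add_mul,
      Matrix.mul_one, Matrix.one_mul, Matrix.mul_assoc]
    abel
  have hEKstar : Sp - Kstar * (C * Sp) - (Sp * Cᴴ) * Kstarᴴ + Kstar * S * Kstarᴴ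
      = Sp - Kstar * (C * Sp) := by
    rw [hPCK, hKS, hPCK]
    abel
  have hkey : ∀ K : Matrix (Fin N) (Fin m) ℂ,
      Sp - K * (C * Sp) - (Sp * Cᴴ) * Kᴴ + K * S * Kᴴ
      = (Sp - Kstar * (C * Sp)) + (K - Kstar) * S * (K - Kstar)ᴴ := by
    intro K
    simp only [conjTranspose_sub, Matrix.sub_mul, Matrix.mul_sub]
    rw [Matrix.mul_assoc K S Kstarᴴ, hSK, hKS, hPCK]
    abel
  constructor
  · intro K
    rw [expand K, expand Kstar, hEKstar, hkey K, trace_add, Complex.add_re]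
    have h0 : 0 ≤ (((K - Kstar) * S * (K - Kstar)ᴴ).trace).re :=
      my_trace_re_nonneg _ (hS.posSemidef.mul_mul_conjTranspose_same (K - Kstar))
    linarith
  · rw [expand Kstar, hEKstar]
    have hCSC : C * Sp * Cᴴ = S - Sm := by rw [hSdef]; abel
    have hsmc : Sm * (Sm⁻¹ * C) = C := by rw [← Matrix.mul_assoc, hSm2, Matrix.one_mul]
    have hleft : (Sp - Kstar * (C * Sp)) * (Sp⁻¹ + Cᴴ * Sm⁻¹ * C) = 1 := by
      have e1 : Kstar * (C * Sp) * Sp⁻¹ = Kstar * C := by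
        simp only [Matrix.mul_assoc]
        rw [hSp1, Matrix.mul_one]
      have e2 : Kstar * (C * Sp) * (Cᴴ * Sm⁻¹ * C)
          = Sp * Cᴴ * (Sm⁻¹ * C) - Kstar * C := by
        have h3 : Kstar * (C * Sp) * (Cᴴ * Sm⁻¹ * C)
            = Kstar * ((C * Sp * Cᴴ) * (Sm⁻¹ * C)) := by
          simp only [Matrix.mul_assoc]
        rw [h3, hCSC, Matrix.sub_mul, Matrix.mul_sub,
          ← Matrix.mul_assoc Kstar S, hKS, hsmc]
      rw [Matrix.sub_mul, Matrix.mul_add, Matrix.mul_add, hSp1, e1, e2]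
      simp only [Matrix.mul_assoc]
      abel
    exact (Matrix.inv_eq_left_inv hleft).symm
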